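/- A pseudofunctor from a one-object bicategory to Cat defines an actegory: given a monoidal category M and a pseudofunctor F from the single-object bicategory associated with M to Cat, let C := the category that F assigns to the unique 0-cell. Then the assignment m ↦ F.map m, φ ↦ F.map₂ φ underlies a monoidal functor from M to the endofunctor category C ⥤ C equipped with its composition monoidal structure, whose structure isomorphisms F.map (m ⊗ n) ≅ F.map m ∘ F.map n and F.map (unit) ≅ 𝟭 are given by the compositor and unitor isomorphisms of the pseudofunctor F. -/

import Mathlib

open CategoryTheory MonoidalCategory

attribute [local instance] CategoryTheory.endofunctorMonoidalCategory

universe v u v₁ u₁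

section Aux

open Bicategory

variable {B : Type*} {C : Type*} [Bicategory B] [Bicategory C] (F : Pseudofunctor B C)

lemma aux_natural_left {a b c : B} {f g : a ⟶ b} (η : f ⟶ g) (h : b ⟶ c) :
    F.map₂ η ▷ F.map h ≫ (F.mapComp g h).inv =
      (F.mapComp f h).inv ≫ F.map₂ (η ▷ h) := by
  rw [F.map₂_whisker_right]; simp

lemma aux_natural_right {a b c : B} (f : a ⟶ b) {g h : b ⟶ c} (η : g ⟶ h) :
    F.map f ◁ F.map₂ η ≫ (F.mapComp f h).inv =
      (F.mapComp f g).inv ≫ F.map₂ (f ◁ η) := by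
  rw [F.map₂_whisker_left]; simp

lemma aux_assoc {a b c d : B} (f : a ⟶ b) (g : b ⟶ c) (h : c ⟶ d) :
    (F.mapComp f g).inv ▷ F.map h ≫ (F.mapComp (f ≫ g) h).inv ≫ F.map₂ (α_ f g h).hom =
      (α_ (F.map f) (F.map g) (F.map h)).hom ≫ F.map f ◁ (F.mapComp g h).inv ≫
        (F.mapComp f (g ≫ h)).inv := by
  rw [F.map₂_associator]; simp

lemma aux_left_unit {a b : B} (f : a ⟶ b) :
    (Bicategory.leftUnitor (F.map f)).hom =
      (F.mapId a).inv ▷ F.map f ≫ (F.mapComp (𝟙 a) f).inv ≫ F.map₂ (Bicategory.leftUnitor f).hom := by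
  rw [F.map₂_left_unitor]; simp

lemma aux_right_unit {a b : B} (f : a ⟶ b) :
    (Bicategory.rightUnitor (F.map f)).hom =
      F.map f ◁ (F.mapId b).inv ≫ (F.mapComp f (𝟙 b)).inv ≫ F.map₂ (Bicategory.rightUnitor f).hom := by
  rw [F.map₂_right_unitor]; simp

end Aux

/-- A pseudofunctor from the one-object bicategory associated with a monoidal category `M`
to `Cat` defines an actegory: with `C` the category assigned to the unique 0-cell, the
assignment `m ↦ F.map m`, `φ ↦ F.map₂ φ` underlies a monoidal functor
`M ⥤ (C ⥤ C)` (for the composition monoidal structure on `C ⥤ C`) whose structure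
isomorphisms are given by the compositors and the unitor of `F`. -/
theorem pseudofunctor_singleObj_actegory (M : Type u) [Category.{v} M] [MonoidalCategory M]
    (F : Pseudofunctor (MonoidalSingleObj M) Cat.{v₁, u₁}) :
    ∃ (Φ : M ⥤ (↑(F.obj (MonoidalSingleObj.star M)) ⥤ ↑(F.obj (MonoidalSingleObj.star M))))
      (e : Φ.CoreMonoidal),
      (∀ m : M, Φ.obj m =
        (F.map (X := MonoidalSingleObj.star M) (Y := MonoidalSingleObj.star M) m).toFunctor) ∧
      (∀ (m n : M) (φ : m ⟶ n), HEq (Φ.map φ)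
        (F.map₂ (a := MonoidalSingleObj.star M) (b := MonoidalSingleObj.star M)
          (f := m) (g := n) φ).toNatTrans) ∧
      HEq e.εIso (Cat.Hom.toNatIso (F.mapId (MonoidalSingleObj.star M)).symm) ∧
      (∀ m n : M, HEq (e.μIso m n)
        (Cat.Hom.toNatIso (F.mapComp (a := MonoidalSingleObj.star M) (b := MonoidalSingleObj.star M)
          (c := MonoidalSingleObj.star M) m n).symm)) := by
  refine ⟨{ obj := fun m => F.map (X := MonoidalSingleObj.star M)
              (Y := MonoidalSingleObj.star M) m |>.toFunctor
            map := fun φ => (F.map₂ φ).toNatTrans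
            map_id := fun m => congrArg Cat.Hom₂.toNatTrans (F.map₂_id m)
            map_comp := fun φ ψ => congrArg Cat.Hom₂.toNatTrans (F.map₂_comp φ ψ) },
          { εIso := Cat.Hom.toNatIso (F.mapId (MonoidalSingleObj.star M)).symm
            μIso := fun m n => Cat.Hom.toNatIso (F.mapComp (a := MonoidalSingleObj.star M)
              (b := MonoidalSingleObj.star M) (c := MonoidalSingleObj.star M) m n).symm
            μIso_hom_natural_left := fun f X' => congrArg Cat.Hom₂.toNatTrans (aux_natural_left F f X')
            μIso_hom_natural_right := fun X' f => congrArg Cat.Hom₂.toNatTrans (aux_natural_right F X' f)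
            associativity := fun X Y Z => congrArg Cat.Hom₂.toNatTrans (aux_assoc F X Y Z)
            left_unitality := fun X => congrArg Cat.Hom₂.toNatTrans (aux_left_unit F X)
            right_unitality := fun X => congrArg Cat.Hom₂.toNatTrans (aux_right_unit F X) },
          fun m => rfl, fun m n φ => HEq.rfl, HEq.rfl, fun m n => HEq.rfl⟩
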